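/- Let n ≥ 1 be a natural number and let A ⊆ ℝⁿ be a nonempty closed convex set with 0 ∉ A, and let b := dist(0, A) be the infimum distance from the origin to A. Then γₙ(A) ≤ Φ(−b). (The FORM estimate is an upper bound for the probability of failure when the failure domain is convex: a convex set at distance b from the origin is contained in a half-space whose Gaussian measure is Φ(−b).) -/

import Mathlib

open MeasureTheory ProbabilityTheory Set
open scoped ENNReal

/-- The standard Gaussian measure on `ℝⁿ` (Euclidean space), as the image of the
`n`-fold product of the standard Gaussian measure on `ℝ`. -/
noncomputable def stdGaussian (n : ℕ) : Measure (EuclideanSpace ℝ (Fin n)) :=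
  (Measure.pi fun _ : Fin n => gaussianReal 0 1).map
    (MeasurableEquiv.toLp 2 (Fin n → ℝ))

lemma pi_gaussian_eq (n : ℕ) :
    (Measure.pi fun _ : Fin n => gaussianReal 0 1) =
      (volume : Measure (Fin n → ℝ)).withDensity
        (fun x => ENNReal.ofReal (∏ i, gaussianPDFReal 0 1 (x i))) := by
  refine Measure.pi_eq fun s hs => ?_
  rw [withDensity_apply _ (MeasurableSet.univ_pi hs),
    ← lintegral_indicator (MeasurableSet.univ_pi hs)]
  have hind : ∀ x : Fin n → ℝ,
      (Set.pi univ s).indicator (fun x => ENNReal.ofReal (∏ i, gaussianPDFReal 0 1 (x i))) x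
        = ENNReal.ofReal (∏ i, (s i).indicator (gaussianPDFReal 0 1) (x i)) := by
    intro x
    by_cases hx : x ∈ Set.pi univ s
    · rw [Set.indicator_of_mem hx]
      congr 1
      exact Finset.prod_congr rfl fun i _ =>
        (Set.indicator_of_mem (hx i (mem_univ i)) _).symm
    · rw [Set.indicator_of_notMem hx]
      rw [Set.mem_univ_pi] at hx
      push_neg at hx
      obtain ⟨i, hi⟩ := hx
      rw [Finset.prod_eq_zero (Finset.mem_univ i) (Set.indicator_of_notMem hi _)]
      simp
  simp_rw [hind]
  have hint : Integrable (fun x : Fin n → ℝ =>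
      ∏ i, (s i).indicator (gaussianPDFReal 0 1) (x i)) :=
    Integrable.fintype_prod_dep fun i => (integrable_gaussianPDFReal 0 1).indicator (hs i)
  rw [← ofReal_integral_eq_lintegral_ofReal hint (ae_of_all _ fun x =>
    Finset.prod_nonneg fun i _ => Set.indicator_nonneg (fun y _ => gaussianPDFReal_nonneg 0 1 y) _)]
  rw [MeasureTheory.integral_fintype_prod_volume_eq_prod
    (f := fun i => (s i).indicator (gaussianPDFReal 0 1))]
  rw [ENNReal.ofReal_prod_of_nonneg fun i _ =>
    integral_nonneg (Set.indicator_nonneg (fun y _ => gaussianPDFReal_nonneg 0 1 y))]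
  exact Finset.prod_congr rfl fun i _ => by
    rw [integral_indicator (hs i), gaussianReal_apply_eq_integral 0 one_ne_zero]

lemma map_withDensity_equiv {α β : Type*} [MeasurableSpace α] [MeasurableSpace β]
    (T : α ≃ᵐ β) (ν : Measure α) (g : β → ℝ≥0∞) (hg : Measurable g) :
    (ν.withDensity (g ∘ T)).map T = (ν.map T).withDensity g := by
  ext s hs
  rw [Measure.map_apply T.measurable hs, withDensity_apply _ (T.measurable hs),
    withDensity_apply _ hs, setLIntegral_map hs hg T.measurable]
  rfl

lemma prod_pdf_eq_of_sum_sq {n : ℕ} (x y : Fin n → ℝ)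
    (h : ∑ i, (x i) ^ 2 = ∑ i, (y i) ^ 2) :
    ∏ i, gaussianPDFReal 0 1 (x i) = ∏ i, gaussianPDFReal 0 1 (y i) := by
  simp only [gaussianPDFReal, sub_zero]
  rw [Finset.prod_mul_distrib, Finset.prod_mul_distrib, ← Real.exp_sum, ← Real.exp_sum]
  congr 2
  simp only [NNReal.coe_one, mul_one, neg_div]
  rw [Finset.sum_neg_distrib, Finset.sum_neg_distrib, ← Finset.sum_div, ← Finset.sum_div, h]

lemma sum_sq_euclidean {n : ℕ} (w : EuclideanSpace ℝ (Fin n)) :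
    ∑ i, (w i) ^ 2 = ‖w‖ ^ 2 := by
  rw [EuclideanSpace.norm_eq, Real.sq_sqrt (Finset.sum_nonneg fun i _ => by positivity)]
  simp [Real.norm_eq_abs, sq_abs]

lemma stdGaussian_map_isometry (n : ℕ)
    (f : EuclideanSpace ℝ (Fin n) ≃ₗᵢ[ℝ] EuclideanSpace ℝ (Fin n)) :
    (stdGaussian n).map f = stdGaussian n := by
  set e := (MeasurableEquiv.toLp 2 (Fin n → ℝ)).symm with he
  have hes : e.symm = MeasurableEquiv.toLp 2 (Fin n → ℝ) := rfl
  set fm : EuclideanSpace ℝ (Fin n) ≃ᵐ EuclideanSpace ℝ (Fin n) :=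
    f.toHomeomorph.toMeasurableEquiv with hfm
  set T : (Fin n → ℝ) ≃ᵐ (Fin n → ℝ) := (e.symm.trans fm).trans e with hT
  have hTcoe : ∀ x, T x = e (f (e.symm x)) := fun _ => rfl
  have hπ : Measure.map T (Measure.pi fun _ : Fin n => gaussianReal 0 1) =
      (Measure.pi fun _ : Fin n => gaussianReal 0 1) := by
    rw [pi_gaussian_eq]
    set g : (Fin n → ℝ) → ℝ≥0∞ :=
      fun x => ENNReal.ofReal (∏ i, gaussianPDFReal 0 1 (x i)) with hg
    have hgmeas : Measurable g := by
      apply Measurable.ennreal_ofReal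
      exact Finset.measurable_prod _ fun i _ =>
        (measurable_gaussianPDFReal 0 1).comp (measurable_pi_apply i)
    have hgT : g ∘ T = g := by
      funext x
      simp only [Function.comp_apply, hg]
      congr 1
      apply prod_pdf_eq_of_sum_sq
      have h1 : ∀ i, (T x) i = (f (e.symm x)) i := fun i => rfl
      have h2 : ∀ i, x i = (e.symm x : EuclideanSpace ℝ (Fin n)) i := fun i => rfl
      simp_rw [h1, h2]
      rw [sum_sq_euclidean, sum_sq_euclidean, f.norm_map]
    have hTvol : Measure.map T (volume : Measure (Fin n → ℝ)) = volume := by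
      have : MeasurePreserving T volume volume :=
        ((EuclideanSpace.volume_preserving_symm_measurableEquiv_toLp (Fin n)).comp
          (f.measurePreserving)).comp
          (EuclideanSpace.volume_preserving_symm_measurableEquiv_toLp (Fin n)).symm
      exact this.map_eq
    conv_lhs => rw [← hgT]
    rw [map_withDensity_equiv T volume g hgmeas, hTvol]
  have h1 : (stdGaussian n).map f =
      ((Measure.pi fun _ : Fin n => gaussianReal 0 1).map T).map e.symm := by
    rw [_root_.stdGaussian, ← hes, Measure.map_map e.symm.measurable T.measurable,
      Measure.map_map f.continuous.measurable e.symm.measurable]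
    congr 1
  rw [h1, hπ, hes, _root_.stdGaussian]

lemma map_eval_pi_gaussian (n : ℕ) (i0 : Fin n) :
    Measure.map (fun x : Fin n → ℝ => x i0)
      (Measure.pi fun _ : Fin n => gaussianReal 0 1) = gaussianReal 0 1 := by
  ext s hs
  rw [Measure.map_apply (measurable_pi_apply i0) hs]
  have : (fun x : Fin n → ℝ => x i0) ⁻¹' s =
      Set.pi univ (Function.update (fun _ => univ) i0 s) := by
    rw [← Set.eval_preimage]
  rw [this, Measure.pi_pi]
  rw [Fintype.prod_eq_single i0 fun j hj => by
    rw [Function.update_of_ne hj]; exact measure_univ]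
  rw [Function.update_self]

lemma gaussianReal_Ici_eq_Iic (b : ℝ) :
    gaussianReal 0 1 (Set.Ici b) = gaussianReal 0 1 (Set.Iic (-b)) := by
  have hneg : (gaussianReal 0 1).map (fun x : ℝ => -1 * x) = gaussianReal 0 1 := by
    have h := gaussianReal_map_const_mul (μ := 0) (v := 1) (-1)
    rw [h]
    norm_num
  have hpre : (fun x : ℝ => -1 * x) ⁻¹' (Set.Iic (-b)) = Set.Ici b := by
    ext x
    simp only [Set.mem_preimage, Set.mem_Iic, Set.mem_Ici, neg_one_mul, neg_le_neg_iff]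
  conv_rhs => rw [← hneg]
  rw [Measure.map_apply (by fun_prop) measurableSet_Iic, hpre]

/-- The FORM estimate is an upper bound for the probability of failure when the failure
domain is convex: a closed convex set `A` with `0 ∉ A` at distance `b` from the origin
has Gaussian measure at most `Φ(-b)`. -/
theorem form_upper_bound (n : ℕ) (hn : 1 ≤ n) (A : Set (EuclideanSpace ℝ (Fin n)))
    (hA_ne : A.Nonempty) (hA_closed : IsClosed A) (hA_conv : Convex ℝ A)
    (h0 : (0 : EuclideanSpace ℝ (Fin n)) ∉ A) :
    stdGaussian n A ≤ gaussianReal 0 1 (Set.Iic (-(Metric.infDist 0 A))) := by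
  haveI : NeZero n := ⟨by omega⟩
  haveI : Nonempty A := hA_ne.to_subtype
  set b : ℝ := Metric.infDist 0 A with hb
  obtain ⟨p, hpA, hpb⟩ := hA_closed.exists_infDist_eq_dist hA_ne 0
  have hpnorm : ‖p‖ = b := by rw [hb, hpb, dist_zero_left]
  have hp0 : p ≠ 0 := fun h => h0 (h ▸ hpA)
  have hbpos : (0 : ℝ) < b := by rw [← hpnorm]; exact norm_pos_iff.mpr hp0
  -- separation via projection characterization
  have h0inf : ‖(0 : EuclideanSpace ℝ (Fin n)) - p‖ = ⨅ w : A, ‖(0 : EuclideanSpace ℝ (Fin n)) - w‖ := by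
    calc ‖(0 : EuclideanSpace ℝ (Fin n)) - p‖ = dist (0 : EuclideanSpace ℝ (Fin n)) p := (dist_eq_norm _ _).symm
    _ = Metric.infDist 0 A := hpb.symm
    _ = ⨅ w : A, dist (0 : EuclideanSpace ℝ (Fin n)) w := Metric.infDist_eq_iInf
    _ = ⨅ w : A, ‖(0 : EuclideanSpace ℝ (Fin n)) - w‖ := iInf_congr fun w => dist_eq_norm _ _
  have hproj := (norm_eq_iInf_iff_real_inner_le_zero hA_conv hpA).mp h0inf
  have hsep : ∀ x ∈ A, ‖p‖ ^ 2 ≤ inner ℝ p x := by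
    intro x hx
    have h := hproj x hx
    rw [zero_sub, inner_neg_left, inner_sub_right] at h
    rw [← real_inner_self_eq_norm_sq]
    linarith
  -- the unit vector and the orthonormal basis starting with it
  set u : EuclideanSpace ℝ (Fin n) := ‖p‖⁻¹ • p with hu_def
  have hu : ‖u‖ = 1 := norm_smul_inv_norm hp0
  have hon : Orthonormal ℝ (Set.restrict ({0} : Set (Fin n)) (fun _ : Fin n => u)) := by
    constructor
    · intro i; exact hu
    · intro i j hij
      exfalso
      apply hij
      have h1 : (i : Fin n) = 0 := i.2
      have h2 : (j : Fin n) = 0 := j.2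
      exact Subtype.ext (h1.trans h2.symm)
  have hcard : Module.finrank ℝ (EuclideanSpace ℝ (Fin n)) = Fintype.card (Fin n) := finrank_euclideanSpace
  obtain ⟨b0, hb0⟩ := hon.exists_orthonormalBasis_extension_of_card_eq hcard
  have hb00 : b0 0 = u := hb0 0 rfl
  set L : EuclideanSpace ℝ (Fin n) → ℝ := fun x => b0.repr x 0 with hL_def
  have hLmeas : Measurable L :=
    ((measurable_pi_apply (0 : Fin n)).comp (WithLp.measurable_ofLp 2 _)).comp b0.repr.continuous.measurable
  have hLinner : ∀ x : EuclideanSpace ℝ (Fin n), L x = inner ℝ u x := by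
    intro x
    rw [hL_def]
    simp only
    rw [b0.repr_apply_apply, hb00]
  have hsub : A ⊆ L ⁻¹' (Set.Ici b) := by
    intro x hx
    have h1 := hsep x hx
    have h2 : (inner ℝ u x : ℝ) = ‖p‖⁻¹ * inner ℝ p x := by
      rw [hu_def, real_inner_smul_left]
    have hpos : (0 : ℝ) < ‖p‖ := norm_pos_iff.mpr hp0
    have h3 : b ≤ inner ℝ u x := by
      rw [h2, ← hpnorm]
      have h4 : ‖p‖⁻¹ * ‖p‖ ^ 2 ≤ ‖p‖⁻¹ * inner ℝ p x :=
        mul_le_mul_of_nonneg_left h1 (inv_nonneg.mpr hpos.le)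
      calc ‖p‖ = ‖p‖⁻¹ * ‖p‖ ^ 2 := by field_simp [sq]
      _ ≤ ‖p‖⁻¹ * inner ℝ p x := h4
    show x ∈ L ⁻¹' Set.Ici b
    rw [Set.mem_preimage, Set.mem_Ici, hLinner]
    exact h3
  -- the pushforward of stdGaussian by L is standard Gaussian
  have hmapL : (stdGaussian n).map L = gaussianReal 0 1 := by
    have h1 : L = (fun y : EuclideanSpace ℝ (Fin n) => y 0) ∘ ⇑b0.repr := rfl
    have heval : Measurable (fun y : EuclideanSpace ℝ (Fin n) => y 0) :=
      (measurable_pi_apply (0 : Fin n)).comp (WithLp.measurable_ofLp 2 _)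
    rw [h1, ← Measure.map_map heval b0.repr.continuous.measurable,
      stdGaussian_map_isometry n b0.repr, _root_.stdGaussian,
      Measure.map_map heval (MeasurableEquiv.measurable _)]
    exact map_eval_pi_gaussian n 0
  calc stdGaussian n A ≤ stdGaussian n (L ⁻¹' Set.Ici b) := measure_mono hsub
  _ = (stdGaussian n).map L (Set.Ici b) :=
      (Measure.map_apply hLmeas measurableSet_Ici).symm
  _ = gaussianReal 0 1 (Set.Ici b) := by rw [hmapL]
  _ = gaussianReal 0 1 (Set.Iic (-b)) := gaussianReal_Ici_eq_Iic b
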